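/- Let V be a finite ground set and f : Finset V → ℝ a submodular function. Then the Lovász extension f⁻ of f is a convex function on the cube [0,1]^V: for all x, y ∈ [0,1]^V and t ∈ [0,1], f⁻(t·x + (1−t)·y) ≤ t·f⁻(x) + (1−t)·f⁻(y). -/

import Mathlib

open MeasureTheory

/-- The Lovász extension of a set function `f`:
`f⁻(x) = ∫₀¹ f({e : x_e ≥ θ}) dθ`. -/
noncomputable def lovaszExt {V : Type*} [Fintype V] (f : Finset V → ℝ) (x : V → ℝ) : ℝ :=
  ∫ θ in (0:ℝ)..1, f (Finset.univ.filter (fun e => θ ≤ x e))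

section Aux

variable {V : Type*} [Fintype V] [DecidableEq V]

/-- The greedy linear form associated to an ordering. -/
noncomputable def ggAux (f : Finset V → ℝ) (x : V → ℝ) : List V → Finset V → ℝ
  | [], _ => 0
  | a :: l, S => x a * (f (insert a S) - f S) + ggAux f x l (insert a S)

/-- Pointwise (in `θ`) decomposition of the integrand. -/
noncomputable def GGAux (f : Finset V → ℝ) (x : V → ℝ) (θ : ℝ) : List V → Finset V → ℝ
  | [], _ => 0
  | a :: l, S => (if θ ≤ x a then f (insert a S) - f S else 0) + GGAux f x θ l (insert a S)

lemma GGAux_eq_zero (f : Finset V → ℝ) (x : V → ℝ) (θ : ℝ) :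
    ∀ (l : List V) (S : Finset V), (∀ e ∈ l, x e < θ) → GGAux f x θ l S = 0
  | [], S, _ => rfl
  | a :: l, S, h => by
    have ha : ¬ θ ≤ x a := not_le.mpr (h a (List.mem_cons_self))
    simp only [GGAux, if_neg ha,
      GGAux_eq_zero f x θ l (insert a S) (fun e he => h e (List.mem_cons_of_mem a he))]
    ring

lemma f_filter_eq (f : Finset V → ℝ) (x : V → ℝ) (θ : ℝ) :
    ∀ (l : List V) (S : Finset V), l.Nodup →
      l.Pairwise (fun a b => x b ≤ x a) → (∀ e ∈ l, e ∉ S) →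
      f (S ∪ l.toFinset.filter (fun e => θ ≤ x e)) = f S + GGAux f x θ l S
  | [], S, _, _, _ => by simp [GGAux]
  | a :: l, S, hnd, hs, hdisj => by
    have hnd' : l.Nodup := (List.nodup_cons.mp hnd).2
    have hanl : a ∉ l := (List.nodup_cons.mp hnd).1
    have hs' : l.Pairwise (fun a b => x b ≤ x a) := hs.of_cons
    have hle : ∀ e ∈ l, x e ≤ x a := fun e he => List.rel_of_pairwise_cons hs he
    by_cases hθ : θ ≤ x a
    · have hdisj' : ∀ e ∈ l, e ∉ insert a S := by
        intro e he
        simp only [Finset.mem_insert, not_or]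
        exact ⟨fun h => hanl (h ▸ he), hdisj e (List.mem_cons_of_mem a he)⟩
      have ih := f_filter_eq f x θ l (insert a S) hnd' hs' hdisj'
      have hfil : (a :: l).toFinset.filter (fun e => θ ≤ x e)
          = insert a (l.toFinset.filter (fun e => θ ≤ x e)) := by
        simp only [List.toFinset_cons, Finset.filter_insert, if_pos hθ]
      rw [hfil]
      have hun : S ∪ insert a (l.toFinset.filter (fun e => θ ≤ x e))
          = insert a S ∪ l.toFinset.filter (fun e => θ ≤ x e) := by
        ext e; simp only [Finset.mem_union, Finset.mem_insert]; tauto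
      rw [hun, ih]
      simp only [GGAux, if_pos hθ]
      ring
    · have hlt : ∀ e ∈ (a :: l), x e < θ := by
        intro e he
        rcases List.mem_cons.mp he with rfl | he'
        · exact not_le.mp hθ
        · exact lt_of_le_of_lt (hle e he') (not_le.mp hθ)
      have hfil : (a :: l).toFinset.filter (fun e => θ ≤ x e) = ∅ := by
        apply Finset.filter_eq_empty_iff.mpr
        intro e he
        exact not_le.mpr (hlt e (by simpa using he))
      rw [hfil, Finset.union_empty]
      have hz : GGAux f x θ l (insert a S) = 0 :=
        GGAux_eq_zero f x θ l (insert a S) (fun e he => hlt e (List.mem_cons_of_mem a he))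
      simp only [GGAux, if_neg hθ, hz]
      ring

lemma step_intervalIntegrable (c r a b : ℝ) :
    IntervalIntegrable (fun θ => if θ ≤ c then r else 0) volume a b := by
  have h : (fun θ => if θ ≤ c then r else 0) = (Set.Iic c).indicator (fun _ => r) := by
    funext θ; simp [Set.indicator, Set.mem_Iic]
  rw [h, intervalIntegrable_iff]
  exact (integrableOn_const measure_Ioc_lt_top.ne).indicator measurableSet_Iic

lemma step_integral (c r : ℝ) (h0 : 0 ≤ c) (h1 : c ≤ 1) :
    ∫ θ in (0:ℝ)..1, (if θ ≤ c then r else 0) = r * c := by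
  rw [← intervalIntegral.integral_add_adjacent_intervals
    (step_intervalIntegrable c r 0 c) (step_intervalIntegrable c r c 1)]
  have e1 : (∫ θ in (0:ℝ)..c, (if θ ≤ c then r else 0)) = ∫ _θ in (0:ℝ)..c, r := by
    apply intervalIntegral.integral_congr
    intro θ hθ
    rw [Set.uIcc_of_le h0] at hθ
    simp [hθ.2]
  have e2 : (∫ θ in c..(1:ℝ), (if θ ≤ c then r else 0)) = ∫ _θ in c..(1:ℝ), (0:ℝ) := by
    apply intervalIntegral.integral_congr_ae
    filter_upwards with θ hθ
    rw [Set.uIoc_of_le h1] at hθ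
    simp [not_le.mpr hθ.1]
  rw [e1, e2, intervalIntegral.integral_const, intervalIntegral.integral_const]
  simp [mul_comm]

lemma GGAux_intervalIntegrable (f : Finset V → ℝ) (x : V → ℝ) :
    ∀ (l : List V) (S : Finset V),
      IntervalIntegrable (fun θ => GGAux f x θ l S) volume 0 1
  | [], S => by
    simp only [GGAux]
    exact intervalIntegrable_const
  | a :: l, S => by
    simp only [GGAux]
    exact (step_intervalIntegrable (x a) (f (insert a S) - f S) 0 1).add
      (GGAux_intervalIntegrable f x l (insert a S))

lemma integral_GGAux (f : Finset V → ℝ) (x : V → ℝ) (hx : ∀ e, x e ∈ Set.Icc (0:ℝ) 1) :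
    ∀ (l : List V) (S : Finset V),
      (∫ θ in (0:ℝ)..1, GGAux f x θ l S) = ggAux f x l S
  | [], S => by simp [GGAux, ggAux]
  | a :: l, S => by
    simp only [GGAux, ggAux]
    rw [intervalIntegral.integral_add
      (step_intervalIntegrable (x a) (f (insert a S) - f S) 0 1)
      (GGAux_intervalIntegrable f x l (insert a S))]
    rw [step_integral (x a) (f (insert a S) - f S) (hx a).1 (hx a).2,
      integral_GGAux f x hx l (insert a S)]
    ring

lemma lovaszExt_eq_ggAux (f : Finset V → ℝ) (x : V → ℝ) (hx : ∀ e, x e ∈ Set.Icc (0:ℝ) 1)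
    (l : List V) (hl : l.toFinset = Finset.univ) (hnd : l.Nodup)
    (hs : l.Pairwise (fun a b => x b ≤ x a)) :
    lovaszExt f x = f ∅ + ggAux f x l ∅ := by
  unfold lovaszExt
  have hpt : ∀ θ : ℝ, f (Finset.univ.filter (fun e => θ ≤ x e))
      = f ∅ + GGAux f x θ l ∅ := by
    intro θ
    have := f_filter_eq f x θ l ∅ hnd hs (fun e _ => Finset.notMem_empty e)
    rwa [hl, Finset.empty_union] at this
  have : (∫ θ in (0:ℝ)..1, f (Finset.univ.filter (fun e => θ ≤ x e)))
      = ∫ θ in (0:ℝ)..1, (f ∅ + GGAux f x θ l ∅) := by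
    apply intervalIntegral.integral_congr
    intro θ _
    exact hpt θ
  rw [this, intervalIntegral.integral_add intervalIntegrable_const
    (GGAux_intervalIntegrable f x l ∅), integral_GGAux f x hx l ∅]
  simp

lemma ggAux_combo (f : Finset V → ℝ) (x y : V → ℝ) (t : ℝ) :
    ∀ (l : List V) (S : Finset V),
      ggAux f (fun e => t * x e + (1 - t) * y e) l S
        = t * ggAux f x l S + (1 - t) * ggAux f y l S
  | [], S => by simp [ggAux]
  | a :: l, S => by
    simp only [ggAux, ggAux_combo f x y t l (insert a S)]
    ring

lemma ggAux_swap (f : Finset V → ℝ) (x : V → ℝ)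
    (hsub : ∀ A B : Finset V, A ⊆ B → ∀ e ∉ B,
      f (insert e A) - f A ≥ f (insert e B) - f B)
    (a b : V) (l : List V) (S : Finset V) (hab : a ≠ b) (haS : a ∉ S) (hbS : b ∉ S)
    (hx : x a ≤ x b) :
    ggAux f x (a :: b :: l) S ≤ ggAux f x (b :: a :: l) S := by
  have hcomm : insert b (insert a S) = insert a (insert b S) := Finset.insert_comm b a S
  simp only [ggAux, hcomm]
  have hkey : f (insert b S) - f S ≥ f (insert b (insert a S)) - f (insert a S) :=
    hsub S (insert a S) (Finset.subset_insert a S) b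
      (by simp [Finset.mem_insert, hab.symm, hbS])
  rw [hcomm] at hkey
  nlinarith [hkey, hx]

lemma ggAux_move_front (f : Finset V → ℝ) (x : V → ℝ)
    (hsub : ∀ A B : Finset V, A ⊆ B → ∀ e ∉ B,
      f (insert e A) - f A ≥ f (insert e B) - f B) (b : V) :
    ∀ (l₁ l₂ : List V) (S : Finset V), (l₁ ++ b :: l₂).Nodup →
      (∀ e ∈ l₁ ++ b :: l₂, e ∉ S) → (∀ a ∈ l₁, x a ≤ x b) →
      ggAux f x (l₁ ++ b :: l₂) S ≤ ggAux f x (b :: (l₁ ++ l₂)) S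
  | [], l₂, S, _, _, _ => le_refl _
  | a :: l₁, l₂, S, hnd, hdisj, hle => by
    have hnd' : (l₁ ++ b :: l₂).Nodup := (List.nodup_cons.mp hnd).2
    have hanl : a ∉ l₁ ++ b :: l₂ := (List.nodup_cons.mp hnd).1
    have hab : a ≠ b := fun h => hanl (h ▸ (by simp : b ∈ l₁ ++ b :: l₂))
    have haS : a ∉ S := hdisj a (by simp)
    have hbS : b ∉ S := hdisj b (by simp)
    have hdisj' : ∀ e ∈ l₁ ++ b :: l₂, e ∉ insert a S := by
      intro e he
      simp only [Finset.mem_insert, not_or]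
      exact ⟨fun h => hanl (h ▸ he), hdisj e (List.mem_cons_of_mem a he)⟩
    have step1 : ggAux f x ((a :: l₁) ++ b :: l₂) S
        ≤ ggAux f x (a :: b :: (l₁ ++ l₂)) S := by
      simp only [List.cons_append, ggAux]
      have := ggAux_move_front f x hsub b l₁ l₂ (insert a S) hnd' hdisj'
        (fun e he => hle e (List.mem_cons_of_mem a he))
      simp only [ggAux, List.append_eq] at this ⊢
      linarith
    have step2 : ggAux f x (a :: b :: (l₁ ++ l₂)) S
        ≤ ggAux f x (b :: a :: (l₁ ++ l₂)) S :=
      ggAux_swap f x hsub a b (l₁ ++ l₂) S hab haS hbS (hle a (by simp))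
    calc ggAux f x ((a :: l₁) ++ b :: l₂) S ≤ ggAux f x (a :: b :: (l₁ ++ l₂)) S := step1
      _ ≤ ggAux f x (b :: a :: (l₁ ++ l₂)) S := step2
      _ = ggAux f x (b :: (a :: l₁) ++ l₂) S := rfl

lemma ggAux_le_sorted (f : Finset V → ℝ) (x : V → ℝ)
    (hsub : ∀ A B : Finset V, A ⊆ B → ∀ e ∉ B,
      f (insert e A) - f A ≥ f (insert e B) - f B) :
    ∀ (l' l : List V) (S : Finset V), l.Perm l' → l.Nodup →
      l'.Pairwise (fun a b => x b ≤ x a) → (∀ e ∈ l, e ∉ S) →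
      ggAux f x l S ≤ ggAux f x l' S
  | [], l, S, hperm, _, _, _ => by
    rw [List.perm_nil.mp hperm]
  | b :: l₂', l, S, hperm, hnd, hs, hdisj => by
    have hbl : b ∈ l := hperm.mem_iff.mpr (by simp)
    obtain ⟨l₁, l₂, rfl⟩ := List.append_of_mem hbl
    have hndsplit := List.nodup_append.mp hnd
    have hle : ∀ a ∈ l₁, x a ≤ x b := by
      intro a ha
      have hab : a ≠ b := by
        intro h; subst h
        exact hndsplit.2.2 _ ha _ List.mem_cons_self rfl
      have hal : a ∈ l₁ ++ b :: l₂ := by simp [ha]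
      have : a ∈ b :: l₂' := hperm.mem_iff.mp hal
      rcases List.mem_cons.mp this with h | h
      · exact absurd h hab
      · exact List.rel_of_pairwise_cons hs h
    have hmid : (l₁ ++ b :: l₂).Perm (b :: (l₁ ++ l₂)) := List.perm_middle
    have hnd2 : (b :: (l₁ ++ l₂)).Nodup := hmid.nodup_iff.mp hnd
    have hbl12 : b ∉ l₁ ++ l₂ := (List.nodup_cons.mp hnd2).1
    have hnd12 : (l₁ ++ l₂).Nodup := (List.nodup_cons.mp hnd2).2
    have hperm2 : (l₁ ++ l₂).Perm l₂' := (hmid.symm.trans hperm).cons_inv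
    have hdisj2 : ∀ e ∈ l₁ ++ l₂, e ∉ insert b S := by
      intro e he
      simp only [Finset.mem_insert, not_or]
      refine ⟨fun h => hbl12 (h ▸ he), hdisj e ?_⟩
      simp only [List.mem_append, List.mem_cons] at he ⊢
      tauto
    have ih := ggAux_le_sorted f x hsub l₂' (l₁ ++ l₂) (insert b S)
      hperm2 hnd12 hs.of_cons hdisj2
    have step1 := ggAux_move_front f x hsub b l₁ l₂ S hnd hdisj hle
    simp only [ggAux, List.append_eq] at step1 ⊢
    linarith

end Aux

/-- the Lovász extension of a submodular function is convex on the cube. -/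
theorem stmt1 {V : Type*} [Fintype V] [DecidableEq V]
    (f : Finset V → ℝ)
    (hsub : ∀ A B : Finset V, A ⊆ B → ∀ e ∉ B,
      f (insert e A) - f A ≥ f (insert e B) - f B)
    (x y : V → ℝ)
    (hx : ∀ e, x e ∈ Set.Icc (0:ℝ) 1) (hy : ∀ e, y e ∈ Set.Icc (0:ℝ) 1)
    (t : ℝ) (ht : t ∈ Set.Icc (0:ℝ) 1) :
    lovaszExt f (fun e => t * x e + (1 - t) * y e)
      ≤ t * lovaszExt f x + (1 - t) * lovaszExt f y := by
  classical
  set z : V → ℝ := fun e => t * x e + (1 - t) * y e with hz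
  have hzIcc : ∀ e, z e ∈ Set.Icc (0:ℝ) 1 := by
    intro e
    obtain ⟨hx0, hx1⟩ := hx e; obtain ⟨hy0, hy1⟩ := hy e
    obtain ⟨ht0, ht1⟩ := ht
    constructor
    · have : 0 ≤ t * x e := mul_nonneg ht0 hx0
      have : 0 ≤ (1 - t) * y e := mul_nonneg (by linarith) hy0
      simp only [hz]; nlinarith
    · simp only [hz]; nlinarith [mul_nonneg ht0 hx0, mul_nonneg (sub_nonneg.mpr ht1) hy0]
  -- sorted lists for z, x, y
  have mksorted : ∀ w : V → ℝ, ∃ l : List V, l.Perm Finset.univ.toList ∧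
      l.Nodup ∧ l.toFinset = Finset.univ ∧ l.Pairwise (fun a b => w b ≤ w a) := by
    intro w
    haveI : IsTotal V (fun a b => w b ≤ w a) := ⟨fun a b => le_total (w b) (w a)⟩
    haveI : IsTrans V (fun a b => w b ≤ w a) := ⟨fun _ _ _ h1 h2 => le_trans h2 h1⟩
    refine ⟨List.insertionSort (fun a b => w b ≤ w a) Finset.univ.toList,
      List.perm_insertionSort _ _, ?_, ?_, List.pairwise_insertionSort _ _⟩
    · exact (List.perm_insertionSort _ _).nodup_iff.mpr (Finset.nodup_toList _)
    · ext e
      simp [List.mem_toFinset, (List.perm_insertionSort (fun a b => w b ≤ w a)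
        Finset.univ.toList).mem_iff, Finset.mem_toList]
  obtain ⟨lz, hlzp, hlznd, hlzu, hlzs⟩ := mksorted z
  obtain ⟨lx, hlxp, hlxnd, hlxu, hlxs⟩ := mksorted x
  obtain ⟨ly, hlyp, hlynd, hlyu, hlys⟩ := mksorted y
  have hez : lovaszExt f z = f ∅ + ggAux f z lz ∅ :=
    lovaszExt_eq_ggAux f z hzIcc lz hlzu hlznd hlzs
  have hex : lovaszExt f x = f ∅ + ggAux f x lx ∅ :=
    lovaszExt_eq_ggAux f x hx lx hlxu hlxnd hlxs
  have hey : lovaszExt f y = f ∅ + ggAux f y ly ∅ :=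
    lovaszExt_eq_ggAux f y hy ly hlyu hlynd hlys
  have hcombo : ggAux f z lz ∅ = t * ggAux f x lz ∅ + (1 - t) * ggAux f y lz ∅ :=
    ggAux_combo f x y t lz ∅
  have hxle : ggAux f x lz ∅ ≤ ggAux f x lx ∅ :=
    ggAux_le_sorted f x hsub lx lz ∅ (hlzp.trans hlxp.symm) hlznd hlxs
      (fun e _ => Finset.notMem_empty e)
  have hyle : ggAux f y lz ∅ ≤ ggAux f y ly ∅ :=
    ggAux_le_sorted f y hsub ly lz ∅ (hlzp.trans hlyp.symm) hlznd hlys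
      (fun e _ => Finset.notMem_empty e)
  obtain ⟨ht0, ht1⟩ := ht
  rw [hez, hex, hey, hcombo]
  nlinarith [mul_le_mul_of_nonneg_left hxle ht0,
    mul_le_mul_of_nonneg_left hyle (by linarith : (0:ℝ) ≤ 1 - t)]
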